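/- (Non-uniform scale transformation of points.) Let v, p ∈ EuclideanSpace ℝ (Fin 3) with v ≠ 0, let D := E(v)∘E*(v) − E*(v)∘E(v), let t ∈ ℝ and θ := t‖v‖²/2, and set Ψ := cosh(θ)•id + (sinh(θ)/‖v‖²)•D and Ψ' := cosh(θ)•id − (sinh(θ)/‖v‖²)•D. Writing p∥ := (⟨p,v⟩/‖v‖²)•v and p⊥ := p − p∥, we have Ψ ∘ (id + E(p)) ∘ Ψ' = id + E(p⊥) + Real.exp(t‖v‖²) • E(p∥). (Since D² = ‖v‖⁴•id, Ψ = e^{tD/2} and Ψ' = e^{−tD/2} is its reversion, so this is the transformation e^{t[v,v*]/2} P (e^{t[v,v*]/2})~ of the paper: it fixes the weight of the point and scales the component of its location along v by e^{t‖v‖²}.) -/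

import Mathlib

open scoped RealInnerProductSpace

noncomputable section

/-- Left exterior multiplication by a vector on the exterior algebra of `ℝ³`. -/
def wedgeOp (v : EuclideanSpace ℝ (Fin 3)) :
    ExteriorAlgebra ℝ (EuclideanSpace ℝ (Fin 3)) →ₗ[ℝ]
      ExteriorAlgebra ℝ (EuclideanSpace ℝ (Fin 3)) :=
  LinearMap.mulLeft ℝ (ExteriorAlgebra.ι ℝ v)

/-- Left contraction (interior product) along the functional `⟪v, ·⟫`. -/
def contrOp (v : EuclideanSpace ℝ (Fin 3)) :
    ExteriorAlgebra ℝ (EuclideanSpace ℝ (Fin 3)) →ₗ[ℝ]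
      ExteriorAlgebra ℝ (EuclideanSpace ℝ (Fin 3)) :=
  CliffordAlgebra.contractLeft (innerₗ (EuclideanSpace ℝ (Fin 3)) v)

private lemma contr_wedge (v u : EuclideanSpace ℝ (Fin 3)) :
    contrOp v * wedgeOp u + wedgeOp u * contrOp v = ⟪v, u⟫ • 1 := by
  refine LinearMap.ext fun x => ?_
  simp [contrOp, wedgeOp, CliffordAlgebra.contractLeft_ι_mul, Module.End.mul_apply]

private lemma wedge_wedge (u w : EuclideanSpace ℝ (Fin 3)) :
    wedgeOp u * wedgeOp w + wedgeOp w * wedgeOp u = 0 := by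
  refine LinearMap.ext fun x => ?_
  simp only [wedgeOp, LinearMap.add_apply, Module.End.mul_apply, LinearMap.mulLeft_apply,
    LinearMap.zero_apply, ← mul_assoc, ← add_mul, ExteriorAlgebra.ι_add_mul_swap, zero_mul]

private lemma contr_contr (v : EuclideanSpace ℝ (Fin 3)) :
    contrOp v * contrOp v = 0 := by
  refine LinearMap.ext fun x => ?_
  simp [contrOp, CliffordAlgebra.contractLeft_contractLeft, Module.End.mul_apply]

private lemma wedge_sq (v : EuclideanSpace ℝ (Fin 3)) :
    wedgeOp v * wedgeOp v = 0 := by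
  rw [wedgeOp, Module.End.mul_eq_comp, ← LinearMap.mulLeft_mul, ExteriorAlgebra.ι_sq_zero]
  exact LinearMap.ext fun x => by simp

private lemma wedge_decomp (a b : EuclideanSpace ℝ (Fin 3)) (c : ℝ) :
    wedgeOp (a + c • b) = wedgeOp a + c • wedgeOp b := by
  refine LinearMap.ext fun x => ?_
  simp [wedgeOp, add_mul, smul_mul_assoc]

set_option maxHeartbeats 1000000 in
/-- non-uniform scale transformation of points, generated by
`D = E(v)∘E*(v) − E*(v)∘E(v)`. -/
theorem scale_of_point (v p : EuclideanSpace ℝ (Fin 3)) (hv : v ≠ 0) (t : ℝ) :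
    (Real.cosh (t * ‖v‖ ^ 2 / 2) • LinearMap.id +
          (Real.sinh (t * ‖v‖ ^ 2 / 2) / ‖v‖ ^ 2) •
            (wedgeOp v ∘ₗ contrOp v - contrOp v ∘ₗ wedgeOp v)) ∘ₗ
        (LinearMap.id + wedgeOp p) ∘ₗ
        (Real.cosh (t * ‖v‖ ^ 2 / 2) • LinearMap.id -
          (Real.sinh (t * ‖v‖ ^ 2 / 2) / ‖v‖ ^ 2) •
            (wedgeOp v ∘ₗ contrOp v - contrOp v ∘ₗ wedgeOp v))
      = LinearMap.id + wedgeOp (p - (⟪p, v⟫ / ‖v‖ ^ 2) • v) +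
          Real.exp (t * ‖v‖ ^ 2) • wedgeOp ((⟪p, v⟫ / ‖v‖ ^ 2) • v) := by
  simp only [← Module.End.one_eq_id, ← Module.End.mul_eq_comp]
  set n : ℝ := ‖v‖ ^ 2 with hn_def
  have hn : n ≠ 0 := by simpa [hn_def, pow_eq_zero_iff] using hv
  set c : ℝ := ⟪p, v⟫ / n with hc_def
  set E := wedgeOp v with hE_def
  set C := contrOp v with hC_def
  set Q := wedgeOp (p - c • v) with hQ_def
  set D : ExteriorAlgebra ℝ (EuclideanSpace ℝ (Fin 3)) →ₗ[ℝ] _ := E * C - C * E with hD_def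
  set ch := Real.cosh (t * n / 2) with hch
  set sh := Real.sinh (t * n / 2) with hsh
  set s : ℝ := sh / n with hs
  -- basic relations
  have hvv : ⟪v, v⟫ = n := real_inner_self_eq_norm_sq v
  have hEE : E * E = 0 := wedge_sq v
  have hCE : C * E + E * C = n • 1 := by rw [hE_def, hC_def, contr_wedge, hvv]
  have hCE' : C * E = n • 1 - E * C := by rw [eq_sub_iff_add_eq, hCE]
  have hCC : C * C = 0 := contr_contr v
  have hvq : ⟪v, p - c • v⟫ = 0 := by
    rw [inner_sub_right, inner_smul_right, hvv, hc_def, real_inner_comm,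
      div_mul_cancel₀ _ hn, sub_self]
  have hCQ : C * Q = -(Q * C) := by
    rw [eq_neg_iff_add_eq_zero, hC_def, hQ_def, contr_wedge, hvq, zero_smul]
  have hEQ : E * Q = -(Q * E) := by
    rw [eq_neg_iff_add_eq_zero]; exact wedge_wedge v _
  -- derived relations
  have hECE : E * C * E = n • E := by
    calc E * C * E = E * (C * E) := by rw [mul_assoc]
      _ = E * (n • 1 - E * C) := by rw [hCE']
      _ = n • E - E * E * C := by rw [mul_sub, mul_smul_comm, mul_one, mul_assoc]
      _ = n • E := by rw [hEE, zero_mul, sub_zero]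
  have hDE : D * E = n • E := by
    rw [hD_def, sub_mul, hECE, mul_assoc, hEE, mul_zero, sub_zero]
  have hED : E * D = -(n • E) := by
    rw [hD_def, mul_sub, ← mul_assoc, hEE, zero_mul, ← mul_assoc, hECE, zero_sub]
  have hDC : D * C = -(n • C) := by
    calc D * C = E * (C * C) - (C * E) * C := by rw [hD_def, sub_mul, mul_assoc]
      _ = -((n • 1 - E * C) * C) := by rw [hCC, mul_zero, hCE', zero_sub]
      _ = -(n • C - E * (C * C)) := by rw [sub_mul, smul_mul_assoc, one_mul, mul_assoc]
      _ = -(n • C) := by rw [hCC, mul_zero, sub_zero]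
  have hDD : D * D = (n * n) • 1 := by
    calc D * D = (D * E) * C - (D * C) * E := by
          rw [hD_def, mul_sub, ← mul_assoc, ← mul_assoc]
      _ = n • (E * C) + n • (C * E) := by
          rw [hDE, hDC, smul_mul_assoc, neg_mul (α := Module.End ℝ (ExteriorAlgebra ℝ (EuclideanSpace ℝ (Fin 3)))), smul_mul_assoc, sub_neg_eq_add]
      _ = n • (C * E + E * C) := by rw [smul_add, add_comm]
      _ = (n * n) • 1 := by rw [hCE, smul_smul]
  have hDQ : D * Q = Q * D := by
    calc D * Q = E * (C * Q) - C * (E * Q) := by rw [hD_def, sub_mul, mul_assoc, mul_assoc]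
      _ = C * (Q * E) - E * (Q * C) := by rw [hCQ, hEQ, mul_neg (α := Module.End ℝ (ExteriorAlgebra ℝ (EuclideanSpace ℝ (Fin 3)))), mul_neg (α := Module.End ℝ (ExteriorAlgebra ℝ (EuclideanSpace ℝ (Fin 3)))), neg_sub_neg]
      _ = (C * Q) * E - (E * Q) * C := by rw [mul_assoc, mul_assoc]
      _ = (Q * E) * C - (Q * C) * E := by
          rw [hCQ, hEQ, neg_mul (α := Module.End ℝ (ExteriorAlgebra ℝ (EuclideanSpace ℝ (Fin 3)))), neg_mul (α := Module.End ℝ (ExteriorAlgebra ℝ (EuclideanSpace ℝ (Fin 3)))), neg_sub_neg]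
      _ = Q * D := by rw [hD_def, mul_sub, mul_assoc, mul_assoc]
  -- scalar facts
  have hsn : s * n = sh := div_mul_cancel₀ _ hn
  have hcs : ch + sh = Real.exp (t * n / 2) := Real.cosh_add_sinh _
  have hexp : (ch + sh) * (ch + sh) = Real.exp (t * n) := by
    rw [hcs, ← Real.exp_add]; ring_nf
  have hc2 : ch * ch - sh * sh = 1 := by
    have := Real.cosh_sq_sub_sinh_sq (t * n / 2)
    rw [hch, hsh]; nlinarith [this]
  -- the three key operator computations
  set Ψ := ch • (1 : ExteriorAlgebra ℝ (EuclideanSpace ℝ (Fin 3)) →ₗ[ℝ] _) + s • D with hΨ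
  set Ψ' := ch • (1 : ExteriorAlgebra ℝ (EuclideanSpace ℝ (Fin 3)) →ₗ[ℝ] _) - s • D with hΨ'
  have hPP : Ψ * Ψ' = 1 := by
    rw [hΨ, hΨ']
    have h3 : s * s * (n * n) = sh * sh := by rw [hs]; field_simp
    simp only [add_mul, mul_sub, smul_mul_assoc, mul_smul_comm, one_mul, mul_one, smul_sub,
      smul_add, smul_smul]
    rw [hDD, smul_smul, h3]
    rw [mul_comm ch s, sub_add_eq_sub_sub, add_sub_cancel_right, ← sub_smul, hc2, one_smul]
  have hPE : Ψ * E = (ch + sh) • E := by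
    rw [hΨ, add_mul, smul_mul_assoc, one_mul, smul_mul_assoc, hDE, smul_smul, hsn, add_smul]
  have hEP' : E * Ψ' = (ch + sh) • E := by
    rw [hΨ', mul_sub, mul_smul_comm, mul_one, mul_smul_comm, hED, smul_neg, smul_smul, hsn,
      sub_neg_eq_add, add_smul]
  have hPQ : Ψ * Q = Q * Ψ := by
    rw [hΨ, add_mul, mul_add, smul_mul_assoc, mul_smul_comm, one_mul, mul_one,
      smul_mul_assoc, mul_smul_comm, hDQ]
  -- decompose wedgeOp p
  have hp : wedgeOp p = Q + c • E := by
    rw [hQ_def, hE_def, ← wedge_decomp, sub_add_cancel]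
  have hcv : wedgeOp (c • v) = c • E := by
    have := wedge_decomp 0 v c
    rwa [zero_add, show wedgeOp (0 : EuclideanSpace ℝ (Fin 3)) = 0 from by
      refine LinearMap.ext fun x => ?_; simp [wedgeOp], zero_add] at this
  rw [hp, hcv]
  calc Ψ * ((1 + (Q + c • E)) * Ψ')
      = Ψ * Ψ' + (Ψ * (Q * Ψ') + c • (Ψ * (E * Ψ'))) := by
        simp only [add_mul, mul_add, smul_mul_assoc, mul_smul_comm, one_mul]
    _ = 1 + (Q + Real.exp (t * n) • (c • E)) := by
        rw [hPP, hEP', mul_smul_comm, hPE, smul_smul (ch + sh) (ch + sh), hexp, smul_comm c,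
          ← mul_assoc Ψ Q Ψ', hPQ, mul_assoc, hPP, mul_one]
    _ = 1 + Q + Real.exp (t * n) • (c • E) := by rw [add_assoc]
end
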